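/- Let a₀ > 0 and let J be the two-sided Jacobi operator on ℓ²(ℤ) with zero diagonal and off-diagonal entries a_j = 1 for j ≠ 0 and a_0. If a₀ > 1, then ±(a₀ + 1/a₀) are eigenvalues of J (with ℓ² eigenvectors), and if 0 < a₀ ≤ 1 then J has no eigenvalues outside [−2,2]. -/

import Mathlib

/-- `l²(ℤ)`-eigenvalue of the two-sided Jacobi operator with zero diagonal and
off-diagonal entries `a`. -/
def IsJacobiEigenvalue (a : ℤ → ℝ) (lam : ℝ) : Prop :=
  ∃ h : ℤ → ℝ, h ≠ 0 ∧ Summable (fun n : ℤ => (h n) ^ 2) ∧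
    ∀ n : ℤ, a (n - 1) * h (n - 1) + a n * h (n + 1) = lam * h n

/-- Sign-flip symmetry: if `lam` is an eigenvalue, so is `-lam`. -/
lemma jacobi_neg_eigen (a : ℤ → ℝ) (lam : ℝ) (H : IsJacobiEigenvalue a lam) :
    IsJacobiEigenvalue a (-lam) := by
  obtain ⟨h, hne, hsum, heq⟩ := H
  have hm1 : (-1 : ℝ) ≠ 0 := by norm_num
  refine ⟨fun n => (-1 : ℝ) ^ n * h n, ?_, ?_, ?_⟩
  · intro h0
    apply hne
    funext n
    have := congrFun h0 n
    simp only [Pi.zero_apply] at this ⊢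
    have hz : ((-1 : ℝ) ^ n) ≠ 0 := zpow_ne_zero n hm1
    exact (mul_eq_zero.mp this).resolve_left hz
  · have : (fun n : ℤ => ((-1 : ℝ) ^ n * h n) ^ 2) = fun n : ℤ => (h n) ^ 2 := by
      funext n
      rw [mul_pow]
      have : ((-1 : ℝ) ^ n) ^ 2 = 1 := by
        rw [← zpow_natCast (((-1 : ℝ) ^ n)) 2, ← zpow_mul]
        rw [mul_comm, zpow_mul]
        norm_num
      rw [this, one_mul]
    rw [this]; exact hsum
  · intro n
    have key := heq n
    have e1 : ((-1 : ℝ) ^ (n - 1)) = -((-1 : ℝ) ^ n) := by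
      have : ((-1 : ℝ) ^ n) = (-1 : ℝ) ^ (n - 1 + 1) := by ring_nf
      rw [this, zpow_add_one₀ hm1]; ring
    have e2 : ((-1 : ℝ) ^ (n + 1)) = -((-1 : ℝ) ^ n) := by
      rw [zpow_add_one₀ hm1]; ring
    simp only [e1, e2]
    linear_combination (-((-1:ℝ) ^ n)) * key

/-- Half-line rigidity: an `ℓ²`-decaying solution of the constant-coefficient
recurrence is a multiple of the geometric solution `r ^ m`. -/
lemma jacobi_halfline (lam r : ℝ) (hr0 : 0 < r) (hr1 : r < 1)
    (hlr : r * (lam - r) = 1) (f : ℕ → ℝ)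
    (hrec : ∀ m : ℕ, f (m + 2) = lam * f (m + 1) - f m)
    (hlim : Filter.Tendsto f Filter.atTop (nhds 0)) :
    ∀ m, f m = f 0 * r ^ m := by
  set u : ℕ → ℝ := fun m => f (m + 1) - r * f m with hu
  have hstep : ∀ m, u (m + 1) * r = u m := by
    intro m
    have hrm := hrec m
    simp only [hu, show m + 1 + 1 = m + 2 from by omega]
    linear_combination r * hrm + f (m + 1) * hlr
  have hconst : ∀ m, u m * r ^ m = u 0 := by
    intro m
    induction m with
    | zero => simp
    | succ k ih =>
      calc u (k + 1) * r ^ (k + 1) = (u (k + 1) * r) * r ^ k := by ring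
        _ = u k * r ^ k := by rw [hstep k]
        _ = u 0 := ih
  have hulim : Filter.Tendsto u Filter.atTop (nhds 0) := by
    have h1 : Filter.Tendsto (fun m : ℕ => f (m + 1)) Filter.atTop (nhds 0) :=
      hlim.comp (Filter.tendsto_add_atTop_nat 1)
    have h2 : Filter.Tendsto (fun m : ℕ => r * f m) Filter.atTop (nhds (r * 0)) :=
      Filter.Tendsto.const_mul r hlim
    have := h1.sub h2
    simpa [hu] using this
  have hu0 : u 0 = 0 := by
    have hzero : Filter.Tendsto (fun m => u m * r ^ m) Filter.atTop (nhds 0) := by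
      apply squeeze_zero_norm (a := fun m => |u m|)
      · intro m
        rw [Real.norm_eq_abs, abs_mul]
        have : |r ^ m| ≤ 1 := by
          rw [abs_of_nonneg (pow_nonneg hr0.le m)]
          exact pow_le_one₀ hr0.le hr1.le
        nlinarith [abs_nonneg (u m)]
      · have : Filter.Tendsto (fun m => |u m|) Filter.atTop (nhds |0|) := hulim.abs
        simpa using this
    have hconst' : Filter.Tendsto (fun m => u m * r ^ m) Filter.atTop (nhds (u 0)) := by
      simp only [hconst]; exact tendsto_const_nhds
    exact (tendsto_nhds_unique hconst' hzero)
  have huz : ∀ m, u m = 0 := by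
    intro m
    have := hconst m
    rw [hu0] at this
    have hrm : r ^ m ≠ 0 := pow_ne_zero m hr0.ne'
    exact (mul_eq_zero.mp this).resolve_right hrm
  intro m
  induction m with
  | zero => simp
  | succ k ih =>
    have := huz k
    simp only [hu] at this
    have : f (k + 1) = r * f k := by linarith
    rw [this, ih]; ring

lemma jacobi_tendsto_of_sq (f : ℕ → ℝ)
    (hf : Filter.Tendsto (fun m => f m ^ 2) Filter.atTop (nhds 0)) :
    Filter.Tendsto f Filter.atTop (nhds 0) := by
  rw [tendsto_zero_iff_norm_tendsto_zero]
  have h1 : Filter.Tendsto (fun m => Real.sqrt (f m ^ 2)) Filter.atTop (nhds (Real.sqrt 0)) :=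
    (Real.continuous_sqrt.tendsto 0).comp hf
  simp only [Real.sqrt_sq_eq_abs, Real.sqrt_zero] at h1
  simpa [Real.norm_eq_abs] using h1

/-- No eigenvalues above `2` when `a₀ ≤ 1`. -/
lemma jacobi_no_eigen_pos (a₀ : ℝ) (ha : 0 < a₀) (ha1 : a₀ ≤ 1) (lam : ℝ)
    (hl : 2 < lam) :
    ¬ IsJacobiEigenvalue (fun j => if j = 0 then a₀ else 1) lam := by
  rintro ⟨h, hne, hsum, heq⟩
  set s : ℝ := Real.sqrt (lam ^ 2 - 4) with hs_def
  have hs2 : s ^ 2 = lam ^ 2 - 4 := Real.sq_sqrt (by nlinarith)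
  have hs0 : 0 ≤ s := Real.sqrt_nonneg _
  set r : ℝ := (lam - s) / 2 with hr_def
  have hr0 : 0 < r := by
    have : s < lam := by nlinarith
    simp only [hr_def]; linarith
  have hr1 : r < 1 := by
    have : lam - 2 < s := by nlinarith
    simp only [hr_def]; linarith
  have hlr : r * (lam - r) = 1 := by
    simp only [hr_def]; nlinarith
  -- h tends to zero along cofinite
  have hcof : Filter.Tendsto (fun n : ℤ => h n ^ 2) Filter.cofinite (nhds 0) :=
    hsum.tendsto_cofinite_zero
  have hlim_of : ∀ e : ℕ → ℤ, Function.Injective e →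
      Filter.Tendsto (fun m => h (e m)) Filter.atTop (nhds 0) := by
    intro e he
    apply jacobi_tendsto_of_sq
    have : Filter.Tendsto e Filter.atTop Filter.cofinite := by
      rw [← Nat.cofinite_eq_atTop]
      exact he.tendsto_cofinite
    exact hcof.comp this
  -- right half-line
  set f : ℕ → ℝ := fun m => h ((m : ℤ) + 1) with hf_def
  have hfrec : ∀ m : ℕ, f (m + 2) = lam * f (m + 1) - f m := by
    intro m
    have key := heq ((m : ℤ) + 2)
    have h1 : ((m : ℤ) + 2) - 1 ≠ 0 := by omega
    have h2 : ((m : ℤ) + 2) ≠ 0 := by omega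
    simp only [h1, h2, if_neg, if_false] at key
    have e1 : ((m : ℤ) + 2) - 1 = (m : ℤ) + 1 := by ring
    have e2 : ((m : ℤ) + 2) + 1 = (m : ℤ) + 3 := by ring
    rw [e1, e2] at key
    simp only [hf_def]
    have e3 : (((m + 2 : ℕ)) : ℤ) + 1 = (m : ℤ) + 3 := by push_cast; ring
    have e4 : (((m + 1 : ℕ)) : ℤ) + 1 = (m : ℤ) + 2 := by push_cast; ring
    rw [e3, e4]
    linarith
  have hflim : Filter.Tendsto f Filter.atTop (nhds 0) := by
    apply hlim_of
    intro x y hxy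
    simpa using hxy
  have hf_eq := jacobi_halfline lam r hr0 hr1 hlr f hfrec hflim
  -- left half-line
  set g : ℕ → ℝ := fun m => h (-(m : ℤ)) with hg_def
  have hgrec : ∀ m : ℕ, g (m + 2) = lam * g (m + 1) - g m := by
    intro m
    have key := heq (-(m : ℤ) - 1)
    have h1 : (-(m : ℤ) - 1) - 1 ≠ 0 := by omega
    have h2 : (-(m : ℤ) - 1) ≠ 0 := by omega
    simp only [h1, h2, if_neg, if_false] at key
    have e1 : (-(m : ℤ) - 1) - 1 = -((m : ℤ) + 2) := by ring
    have e2 : (-(m : ℤ) - 1) + 1 = -(m : ℤ) := by ring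
    rw [e1, e2] at key
    simp only [hg_def]
    have e3 : -(((m + 2 : ℕ)) : ℤ) = -((m : ℤ) + 2) := by push_cast; ring
    have e4 : -(((m + 1 : ℕ)) : ℤ) = -(m : ℤ) - 1 := by push_cast; ring
    rw [e3, e4]
    linarith
  have hglim : Filter.Tendsto g Filter.atTop (nhds 0) := by
    apply hlim_of
    intro x y hxy
    simpa using hxy
  have hg_eq := jacobi_halfline lam r hr0 hr1 hlr g hgrec hglim
  -- matching conditions
  have hh1 : h 1 = f 0 := by simp [hf_def]
  have hh2 : h 2 = f 0 * r := by
    have := hf_eq 1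
    simp only [hf_def] at this ⊢
    norm_num at this ⊢
    linear_combination this
  have hh0 : h 0 = g 0 := by simp [hg_def]
  have hhm1 : h (-1) = g 0 * r := by
    have := hg_eq 1
    simp only [hg_def] at this ⊢
    norm_num at this ⊢
    linear_combination this
  -- equation at n = 0
  have k0 := heq 0
  norm_num at k0
  rw [hhm1, hh0, hh1] at k0
  -- equation at n = 1
  have k1 := heq 1
  norm_num at k1
  rw [hh0, hh2, hh1] at k1
  -- derive g 0 = 0 and f 0 = 0
  have e0 : a₀ * f 0 * r = g 0 := by linear_combination r * k0 + (g 0) * hlr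
  have e1' : a₀ * g 0 * r = f 0 := by linear_combination r * k1 + (f 0) * hlr
  have e2' : g 0 * (a₀ ^ 2 * r ^ 2 - 1) = 0 := by linear_combination e0 + a₀ * r * e1'
  have hlt : a₀ ^ 2 * r ^ 2 - 1 < 0 := by
    have hx : 0 < a₀ * r := mul_pos ha hr0
    have hx1 : a₀ * r < 1 := by nlinarith
    nlinarith [mul_pos hx (sub_pos.mpr hx1)]
  have hg0 : g 0 = 0 := by
    rcases mul_eq_zero.mp e2' with hz | hz
    · exact hz
    · linarith
  have hf0 : f 0 = 0 := by rw [hg0] at e1'; linarith [e1']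
  apply hne
  funext n
  simp only [Pi.zero_apply]
  cases n with
  | ofNat m =>
    cases m with
    | zero =>
      have := hh0; simpa [hg0] using this
    | succ k =>
      have := hf_eq k
      rw [hf0] at this
      simp only [hf_def] at this
      rw [show (Int.ofNat (k + 1)) = (k : ℤ) + 1 from by
        show ((k + 1 : ℕ) : ℤ) = (k : ℤ) + 1; push_cast; ring]
      simpa using this
  | negSucc m =>
    have := hg_eq (m + 1)
    rw [hg0] at this
    simp only [hg_def] at this
    have e : (Int.negSucc m) = -((m : ℤ) + 1) := by
      simp [Int.negSucc_eq]
    rw [e]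
    simpa using this

theorem two_sided_jacobi_single_weight (a₀ : ℝ) (ha : 0 < a₀) :
    (1 < a₀ →
      IsJacobiEigenvalue (fun j => if j = 0 then a₀ else 1) (a₀ + 1/a₀) ∧
      IsJacobiEigenvalue (fun j => if j = 0 then a₀ else 1) (-(a₀ + 1/a₀))) ∧
    (a₀ ≤ 1 → ∀ lam : ℝ, lam ∉ Set.Icc (-2 : ℝ) 2 →
      ¬ IsJacobiEigenvalue (fun j => if j = 0 then a₀ else 1) lam) := by
  have ha0 : a₀ ≠ 0 := ha.ne'
  constructor
  · intro ha1
    have hpos : IsJacobiEigenvalue (fun j => if j = 0 then a₀ else 1) (a₀ + 1/a₀) := by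
      refine ⟨fun n => if 1 ≤ n then a₀ ^ (1 - n) else a₀ ^ n, ?_, ?_, ?_⟩
      · intro h0
        have := congrFun h0 0
        simp only [Pi.zero_apply] at this
        norm_num at this
      · -- summability
        have hq0 : (0:ℝ) ≤ (a₀ ^ 2)⁻¹ := by positivity
        have hq1 : (a₀ ^ 2)⁻¹ < 1 := by
          rw [inv_lt_one_iff₀]; right; nlinarith
        have hgeo : Summable (fun m : ℕ => a₀ ^ 2 * ((a₀ ^ 2)⁻¹) ^ m) :=
          Summable.mul_left _ (summable_geometric_of_lt_one hq0 hq1)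
        have hz : ∀ k : ℕ, ((a₀ : ℝ) ^ (-(k : ℤ))) ^ 2 = ((a₀ ^ 2)⁻¹) ^ k := by
          intro k
          rw [zpow_neg, zpow_natCast, ← inv_pow, ← pow_mul, ← inv_pow, ← pow_mul,
            mul_comm]
        apply Summable.of_nat_of_neg
        · -- over ℕ
          apply Summable.of_nonneg_of_le (f := fun m : ℕ => a₀ ^ 2 * ((a₀ ^ 2)⁻¹) ^ m)
          · intro m; positivity
          · intro m
            cases m with
            | zero =>
              norm_num
              rw [abs_of_pos ha]
              linarith
            | succ k =>
              have hm : (1 : ℤ) ≤ ((k + 1 : ℕ) : ℤ) := by push_cast; omega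
              simp only [hm, if_pos]
              have e : (1 : ℤ) - ((k + 1 : ℕ) : ℤ) = -(k : ℤ) := by push_cast; ring
              rw [e, hz k]
              have e2 : a₀ ^ 2 * ((a₀ ^ 2)⁻¹) ^ (k + 1) = ((a₀ ^ 2)⁻¹) ^ k := by
                have h2 : (a₀ : ℝ) ^ 2 ≠ 0 := by positivity
                field_simp
                rw [pow_succ (1 / a₀ ^ 2) k, mul_comm, mul_assoc, one_div, inv_mul_cancel₀ h2, mul_one]
              rw [e2]
          · exact hgeo
        · -- over -ℕ
          apply Summable.of_nonneg_of_le (f := fun m : ℕ => a₀ ^ 2 * ((a₀ ^ 2)⁻¹) ^ m)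
          · intro m; positivity
          · intro m
            have hm : ¬ (1 : ℤ) ≤ -(m : ℤ) := by omega
            simp only [hm, if_neg, if_false]
            rw [hz m]
            have hpow : (0:ℝ) ≤ ((a₀ ^ 2)⁻¹) ^ m := by positivity
            nlinarith [mul_nonneg (by nlinarith : (0:ℝ) ≤ a₀ ^ 2 - 1) hpow]
          · exact hgeo
      · -- eigen equation
        intro n
        rcases lt_trichotomy n 0 with hn | hn | hn
        · -- n ≤ -1
          have h1 : n - 1 ≠ 0 := by omega
          have h2 : n ≠ 0 := by omega
          have c1 : ¬ (1 ≤ n - 1) := by omega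
          have c2 : ¬ (1 ≤ n + 1) := by omega
          have c3 : ¬ (1 ≤ n) := by omega
          simp only [h1, h2, if_neg, if_false, c1, c2, c3]
          have e1 : (a₀ : ℝ) ^ (n - 1) = a₀ ^ n / a₀ := by
            rw [zpow_sub₀ ha0, zpow_one]
          have e2 : (a₀ : ℝ) ^ (n + 1) = a₀ ^ n * a₀ := by
            rw [zpow_add_one₀ ha0]
          rw [e1, e2]
          field_simp
          ring
        · subst hn
          norm_num
          field_simp
          ring
        · rcases eq_or_lt_of_le (show (1:ℤ) ≤ n by omega) with hn1 | hn1
          · -- n = 1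
            have : n = 1 := by omega
            subst this
            norm_num
          · -- n ≥ 2
            have h1 : n - 1 ≠ 0 := by omega
            have h2 : n ≠ 0 := by omega
            have c1 : (1 ≤ n - 1) := by omega
            have c2 : (1 ≤ n + 1) := by omega
            have c3 : (1 ≤ n) := by omega
            simp only [h1, h2, if_neg, if_false, c1, c2, c3, if_pos, if_true]
            have e1 : (a₀ : ℝ) ^ (1 - (n - 1)) = a₀ ^ (1 - n) * a₀ := by
              rw [show (1 : ℤ) - (n - 1) = (1 - n) + 1 by ring, zpow_add_one₀ ha0]
            have e2 : (a₀ : ℝ) ^ (1 - (n + 1)) = a₀ ^ (1 - n) / a₀ := by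
              rw [show (1 : ℤ) - (n + 1) = (1 - n) - 1 by ring, zpow_sub₀ ha0, zpow_one]
            rw [e1, e2]
            field_simp
    exact ⟨hpos, jacobi_neg_eigen _ _ hpos⟩
  · intro ha1 lam hlam
    simp only [Set.mem_Icc, not_and_or, not_le] at hlam
    rcases hlam with hl | hl
    · -- lam < -2 : reduce via sign flip
      intro H
      have H' := jacobi_neg_eigen _ _ H
      exact jacobi_no_eigen_pos a₀ ha ha1 (-lam) (by linarith) H'
    · exact jacobi_no_eigen_pos a₀ ha ha1 lam hl
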